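/- Let a, b, c, d be affinely independent points of EuclideanSpace ℝ (Fin 3). Then the total curvature of the tetrahedron is 4π: (2π − (∠ c a d + ∠ d a b + ∠ b a c)) + (2π − (∠ d b c + ∠ a b d + ∠ a b c)) + (2π − (∠ b c d + ∠ d c a + ∠ a c b)) + (2π − (∠ b d c + ∠ c d a + ∠ a d b)) = 4π. Equivalently, the twelve face angles of a nondegenerate tetrahedron sum to 4π. -/

import Mathlib

open EuclideanGeometry Real

/-- The total curvature of a nondegenerate tetrahedron is `4π`;
equivalently, its twelve face angles sum to `4π`. -/
theorem total_curvature_eq_four_pi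
    (a b c d : EuclideanSpace ℝ (Fin 3))
    (h : AffineIndependent ℝ ![a, b, c, d]) :
    (2 * π - (∠ c a d + ∠ d a b + ∠ b a c)) +
    (2 * π - (∠ d b c + ∠ a b d + ∠ a b c)) +
    (2 * π - (∠ b c d + ∠ d c a + ∠ a c b)) +
    (2 * π - (∠ b d c + ∠ c d a + ∠ a d b)) = 4 * π := by
  have hi := h.injective
  have hba : b ≠ a := fun e => (by decide : (1 : Fin 4) ≠ 0) (hi (by simpa using e))
  have hca : c ≠ a := fun e => (by decide : (2 : Fin 4) ≠ 0) (hi (by simpa using e))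
  have hda : d ≠ a := fun e => (by decide : (3 : Fin 4) ≠ 0) (hi (by simpa using e))
  have hcb : c ≠ b := fun e => (by decide : (2 : Fin 4) ≠ 1) (hi (by simpa using e))
  have hdb : d ≠ b := fun e => (by decide : (3 : Fin 4) ≠ 1) (hi (by simpa using e))
  have h1 := EuclideanGeometry.angle_add_angle_add_angle_eq_pi (p₃ := c) hba
  have h2 := EuclideanGeometry.angle_add_angle_add_angle_eq_pi (p₃ := d) hba
  have h3 := EuclideanGeometry.angle_add_angle_add_angle_eq_pi (p₂ := c) (p₃ := d) hca
  have h4 := EuclideanGeometry.angle_add_angle_add_angle_eq_pi (p₁ := b) (p₂ := c) (p₃ := d) hcb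
  rw [EuclideanGeometry.angle_comm b c a, EuclideanGeometry.angle_comm c a b] at h1
  rw [EuclideanGeometry.angle_comm b d a] at h2
  rw [EuclideanGeometry.angle_comm a c d, EuclideanGeometry.angle_comm d a c] at h3
  rw [EuclideanGeometry.angle_comm c d b] at h4
  linarith
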